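/- Let n, k ≥ 1 and let a₁, …, a_k be nonnegative integers. In ℝ^{k+n} consider the following finite set Δ₁ of vectors: the first k standard basis vectors e₁,…,e_k; the vector −(e₁+…+e_k); the last n standard basis vectors e_{k+1},…,e_{k+n}; and the vector (−a₁,…,−a_k,−1,…,−1) (with −1 in the last n coordinates). Let Δ = { w ∈ ℝ^{k+n} : ⟨w, v⟩ ≥ −1 for all v ∈ Δ₁ }. Then max { ⟨w, v⟩ : w ∈ Δ, v ∈ Δ₁ } = max(k, n + a₁ + … + a_k). (Via the toric formula lct = 1/(1+max⟨w,v⟩), this recovers lct(ℙ_{ℙⁿ}(O ⊕ O(−a₁) ⊕ … ⊕ O(−a_k))) = 1/(1 + max(k, n + Σaᵢ)).) -/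

import Mathlib

open Matrix

/-- For the fan of `ℙ_{ℙⁿ}(O ⊕ O(−a₁) ⊕ … ⊕ O(−a_k))` with primitive generators
`e₁,…,e_k, −(e₁+…+e_k), e_{k+1},…,e_{k+n}, (−a₁,…,−a_k,−1,…,−1)` and anticanonical
polytope `Δ`, the maximum of `⟨w,v⟩` over `w ∈ Δ`, `v ∈ Δ₁` equals `max(k, n + Σaᵢ)`. -/
theorem stmt13 (n k : ℕ) (hn : 1 ≤ n) (hk : 1 ≤ k) (a : Fin k → ℕ)
    (v : Fin k ⊕ Fin n ⊕ Bool → Fin (k + n) → ℝ)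
    (hv1 : ∀ i : Fin k, v (Sum.inl i) = Pi.single (Fin.castAdd n i) 1)
    (hv2 : ∀ j : Fin n, v (Sum.inr (Sum.inl j)) = Pi.single (Fin.natAdd k j) 1)
    (hv3 : v (Sum.inr (Sum.inr false)) = fun t : Fin (k + n) => if (t : ℕ) < k then (-1 : ℝ) else 0)
    (hv4 : v (Sum.inr (Sum.inr true)) =
      fun t : Fin (k + n) => if h : (t : ℕ) < k then -(a ⟨t, h⟩ : ℝ) else -1)
    (Δ : Set (Fin (k + n) → ℝ)) (hΔ : Δ = {w | ∀ ι, -1 ≤ w ⬝ᵥ v ι}) :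
    IsGreatest {x : ℝ | ∃ w ∈ Δ, ∃ ι, x = w ⬝ᵥ v ι}
      ((max k (n + ∑ i, a i) : ℕ) : ℝ) := by
  have hdot1 : ∀ (w : Fin (k+n) → ℝ) (i : Fin k),
      w ⬝ᵥ v (Sum.inl i) = w (Fin.castAdd n i) := by
    intro w i; rw [hv1, dotProduct_single, mul_one]
  have hdot2 : ∀ (w : Fin (k+n) → ℝ) (j : Fin n),
      w ⬝ᵥ v (Sum.inr (Sum.inl j)) = w (Fin.natAdd k j) := by
    intro w j; rw [hv2, dotProduct_single, mul_one]
  have hdot3 : ∀ (w : Fin (k+n) → ℝ),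
      w ⬝ᵥ v (Sum.inr (Sum.inr false)) = -∑ i : Fin k, w (Fin.castAdd n i) := by
    intro w
    rw [hv3]
    simp only [dotProduct, Fin.sum_univ_add, Fin.coe_castAdd, Fin.coe_natAdd]
    have h1 : ∀ i : Fin k, w (Fin.castAdd n i) * (if (i : ℕ) < k then (-1:ℝ) else 0)
        = -(w (Fin.castAdd n i)) := by
      intro i; rw [if_pos i.isLt]; ring
    have h2 : ∀ j : Fin n, w (Fin.natAdd k j) * (if k + (j : ℕ) < k then (-1:ℝ) else 0) = 0 := by
      intro j; rw [if_neg (by omega)]; ring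
    simp only [h1, h2, Finset.sum_const_zero, add_zero, Finset.sum_neg_distrib]
  have hdot4 : ∀ (w : Fin (k+n) → ℝ),
      w ⬝ᵥ v (Sum.inr (Sum.inr true)) =
        -∑ i : Fin k, (a i : ℝ) * w (Fin.castAdd n i) - ∑ j : Fin n, w (Fin.natAdd k j) := by
    intro w
    rw [hv4]
    simp only [dotProduct, Fin.sum_univ_add, Fin.coe_castAdd, Fin.coe_natAdd]
    have h1 : ∀ i : Fin k, w (Fin.castAdd n i) *
        (if h : (i : ℕ) < k then -(a ⟨(i:ℕ), h⟩ : ℝ) else -1)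
        = -((a i : ℝ) * w (Fin.castAdd n i)) := by
      intro i; rw [dif_pos i.isLt]; rw [Fin.eta]; ring
    have h2 : ∀ j : Fin n, w (Fin.natAdd k j) *
        (if h : k + (j : ℕ) < k then -(a ⟨k + (j:ℕ), h⟩ : ℝ) else -1)
        = -(w (Fin.natAdd k j)) := by
      intro j; rw [dif_neg (by omega)]; ring
    simp only [h1, h2, Finset.sum_neg_distrib]
    ring
  have hcast : ((max k (n + ∑ i, a i) : ℕ) : ℝ) = max (k : ℝ) ((n : ℝ) + ∑ i, (a i : ℝ)) := by
    push_cast [Nat.cast_max]; ring_nf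
  have hSnn : (0:ℝ) ≤ ∑ i, (a i : ℝ) := Finset.sum_nonneg fun i _ => Nat.cast_nonneg _
  -- the witness
  set w₀ : Fin (k+n) → ℝ := fun _ => -1 with hw₀def
  have hval3 : w₀ ⬝ᵥ v (Sum.inr (Sum.inr false)) = k := by
    rw [hdot3]; simp [hw₀def]
  have hval4 : w₀ ⬝ᵥ v (Sum.inr (Sum.inr true)) = (n : ℝ) + ∑ i, (a i : ℝ) := by
    rw [hdot4]
    have h1 : ∑ i : Fin k, (a i:ℝ) * w₀ (Fin.castAdd n i) = -∑ i, (a i:ℝ) := by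
      simp [hw₀def, Finset.sum_neg_distrib]
    have h2 : ∑ j : Fin n, w₀ (Fin.natAdd k j) = -(n:ℝ) := by simp [hw₀def]
    rw [h1, h2]; ring
  have hw₀ : w₀ ∈ Δ := by
    rw [hΔ]
    rintro (i | j | b)
    · rw [hdot1]
    · rw [hdot2]
    · cases b
      · rw [hval3]
        have : (0:ℝ) ≤ k := Nat.cast_nonneg _
        linarith
      · rw [hval4]
        have : (0:ℝ) ≤ n := Nat.cast_nonneg _
        linarith
  constructor
  · -- membership
    rcases le_total (k:ℝ) ((n:ℝ) + ∑ i, (a i : ℝ)) with h | h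
    · exact ⟨w₀, hw₀, Sum.inr (Sum.inr true), by rw [hval4, hcast, max_eq_right h]⟩
    · exact ⟨w₀, hw₀, Sum.inr (Sum.inr false), by rw [hval3, hcast, max_eq_left h]⟩
  · -- upper bound
    rintro x ⟨w, hw, ι, rfl⟩
    rw [hΔ] at hw
    have hwi : ∀ i : Fin k, -1 ≤ w (Fin.castAdd n i) := by
      intro i; have := hw (Sum.inl i); rwa [hdot1] at this
    have hwj : ∀ j : Fin n, -1 ≤ w (Fin.natAdd k j) := by
      intro j; have := hw (Sum.inr (Sum.inl j)); rwa [hdot2] at this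
    have hsum1 : ∑ i : Fin k, w (Fin.castAdd n i) ≤ 1 := by
      have := hw (Sum.inr (Sum.inr false)); rw [hdot3] at this; linarith
    have hsum2 : ∑ i : Fin k, (a i : ℝ) * w (Fin.castAdd n i)
        + ∑ j : Fin n, w (Fin.natAdd k j) ≤ 1 := by
      have := hw (Sum.inr (Sum.inr true)); rw [hdot4] at this; linarith
    have hksum_lb : -(k:ℝ) ≤ ∑ i : Fin k, w (Fin.castAdd n i) := by
      have := Finset.card_nsmul_le_sum Finset.univ (fun i => w (Fin.castAdd n i)) (-1)
        (fun i _ => hwi i)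
      simpa [nsmul_eq_mul, mul_comm] using this
    have hnsum_lb : -(n:ℝ) ≤ ∑ j : Fin n, w (Fin.natAdd k j) := by
      have := Finset.card_nsmul_le_sum Finset.univ (fun j => w (Fin.natAdd k j)) (-1)
        (fun j _ => hwj j)
      simpa [nsmul_eq_mul, mul_comm] using this
    have haw_lb : -∑ i, (a i : ℝ) ≤ ∑ i : Fin k, (a i : ℝ) * w (Fin.castAdd n i) := by
      rw [← Finset.sum_neg_distrib]
      apply Finset.sum_le_sum
      intro i _
      have := hwi i
      nlinarith [Nat.cast_nonneg (α := ℝ) (a i)]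
    have hmk : (k:ℝ) ≤ ((max k (n + ∑ i, a i) : ℕ) : ℝ) := by
      rw [hcast]; exact le_max_left _ _
    have hmn : (n:ℝ) + ∑ i, (a i : ℝ) ≤ ((max k (n + ∑ i, a i) : ℕ) : ℝ) := by
      rw [hcast]; exact le_max_right _ _
    rcases ι with i | j | b
    · -- w_i ≤ k
      rw [hdot1]
      have hsplit : w (Fin.castAdd n i) + ∑ i' ∈ Finset.univ.erase i, w (Fin.castAdd n i')
          = ∑ i' : Fin k, w (Fin.castAdd n i') :=
        Finset.add_sum_erase _ (fun i' => w (Fin.castAdd n i')) (Finset.mem_univ i)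
      have hlb : -((k:ℝ) - 1) ≤ ∑ i' ∈ Finset.univ.erase i, w (Fin.castAdd n i') := by
        have := Finset.card_nsmul_le_sum (Finset.univ.erase i)
          (fun i' => w (Fin.castAdd n i')) (-1) (fun i' _ => hwi i')
        have hcard : ((Finset.univ.erase i).card : ℝ) = (k:ℝ) - 1 := by
          rw [Finset.card_erase_of_mem (Finset.mem_univ i)]
          simp
          have : (1:ℕ) ≤ k := hk
          push_cast [Nat.cast_sub this]
          ring
        rw [nsmul_eq_mul, hcard] at this
        linarith
      have : w (Fin.castAdd n i) ≤ (k:ℝ) := by linarith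
      linarith
    · -- w_{k+j} ≤ n + S
      rw [hdot2]
      have hsplit : w (Fin.natAdd k j) + ∑ j' ∈ Finset.univ.erase j, w (Fin.natAdd k j')
          = ∑ j' : Fin n, w (Fin.natAdd k j') :=
        Finset.add_sum_erase _ (fun j' => w (Fin.natAdd k j')) (Finset.mem_univ j)
      have hlb : -((n:ℝ) - 1) ≤ ∑ j' ∈ Finset.univ.erase j, w (Fin.natAdd k j') := by
        have := Finset.card_nsmul_le_sum (Finset.univ.erase j)
          (fun j' => w (Fin.natAdd k j')) (-1) (fun j' _ => hwj j')
        have hcard : ((Finset.univ.erase j).card : ℝ) = (n:ℝ) - 1 := by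
          rw [Finset.card_erase_of_mem (Finset.mem_univ j)]
          simp
          have : (1:ℕ) ≤ n := hn
          push_cast [Nat.cast_sub this]
          ring
        rw [nsmul_eq_mul, hcard] at this
        linarith
      have : w (Fin.natAdd k j) ≤ (n:ℝ) + ∑ i, (a i : ℝ) := by linarith
      linarith
    · cases b
      · rw [hdot3]; linarith
      · rw [hdot4]; linarith
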